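/- Let $T$ be a second countable topological space and $f \colon \Omega \times T \to [-\infty, \infty]$ an integrand. Then $f$ is pre-normal (i.e. the epigraphical multifunction $\omega \mapsto \mathrm{epi}\, f_\omega \subset T \times \mathbb{R}$ is Effros measurable) if and only if $f$ is infimally measurable, i.e. for every open $O \subset T$ the function $\omega \mapsto \inf_{x \in O} f_\omega(x)$ is measurable. -/

import Mathlib

open Filter Topology Set

/-- For a second countable topological space `T`, an integrand
`f : Ω × T → [-∞,∞]` is pre-normal (its epigraphical multifunction is Effros
measurable) iff it is infimally measurable (for every open `O ⊆ T` the map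
`ω ↦ inf_{x ∈ O} f_ω(x)` is measurable). -/
theorem prenormal_iff_infimally_measurable {Ω T : Type*} [MeasurableSpace Ω]
    [TopologicalSpace T] [SecondCountableTopology T]
    (f : Ω → T → EReal) :
    (∀ O : Set (T × ℝ), IsOpen O →
      MeasurableSet {ω : Ω | ∃ p ∈ O, f ω p.1 ≤ (p.2 : EReal)}) ↔
    (∀ O : Set T, IsOpen O → Measurable fun ω : Ω => ⨅ x : O, f ω x) := by
  constructor
  · intro h O hO
    apply measurable_of_Iio
    intro c
    have hopen : IsOpen {r : ℝ | (r : EReal) < c} := by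
      have : {r : ℝ | (r : EReal) < c} = (fun r : ℝ => (r : EReal)) ⁻¹' Iio c := rfl
      rw [this]
      exact continuous_coe_real_ereal.isOpen_preimage _ isOpen_Iio
    have key := h (O ×ˢ {r : ℝ | (r : EReal) < c}) (hO.prod hopen)
    convert key using 1
    ext ω
    simp only [mem_preimage, mem_Iio, mem_setOf_eq, mem_prod]
    constructor
    · intro hc
      rw [iInf_lt_iff] at hc
      obtain ⟨⟨x, hx⟩, hfx⟩ := hc
      obtain ⟨q, hq1, hq2⟩ := EReal.exists_rat_btwn_of_lt hfx
      exact ⟨(x, (q : ℝ)), ⟨hx, hq2⟩, le_of_lt hq1⟩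
    · rintro ⟨⟨x, r⟩, ⟨hx, hr⟩, hfr⟩
      calc (⨅ y : O, f ω y) ≤ f ω x := iInf_le _ (⟨x, hx⟩ : O)
        _ ≤ (r : EReal) := hfr
        _ < c := hr
  · intro h O hO
    obtain ⟨BT, hBTc, -, hBT⟩ := TopologicalSpace.exists_countable_basis T
    have hB := hBT.prod Real.isTopologicalBasis_Ioo_rat
    obtain ⟨S, hSB, hOS⟩ := hB.open_eq_sUnion hO
    have hBRc : (⋃ (a : ℚ) (b : ℚ) (_ : a < b), {Ioo (a : ℝ) b}).Countable := by
      apply Set.countable_iUnion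
      intro a
      apply Set.countable_iUnion
      intro b
      exact (Set.countable_singleton _).mono (Set.iUnion_subset fun _ => le_refl _)
    have hSc : S.Countable := ((hBTc.image2 hBRc _).mono hSB)
    have heq : {ω : Ω | ∃ p ∈ O, f ω p.1 ≤ (p.2 : EReal)} =
        ⋃ s ∈ S, {ω : Ω | ∃ p ∈ s, f ω p.1 ≤ (p.2 : EReal)} := by
      subst hOS
      ext ω
      simp only [mem_setOf_eq, mem_iUnion, mem_sUnion]
      constructor
      · rintro ⟨p, ⟨s, hs, hps⟩, hle⟩
        exact ⟨s, hs, p, hps, hle⟩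
      · rintro ⟨s, hs, p, hps, hle⟩
        exact ⟨p, ⟨s, hs, hps⟩, hle⟩
    rw [heq]
    apply MeasurableSet.biUnion hSc
    intro s hs
    obtain ⟨U, hU, v, hv, rfl⟩ := hSB hs
    simp only [mem_iUnion, mem_singleton_iff] at hv
    obtain ⟨a, b, hab, rfl⟩ := hv
    have hkey : {ω : Ω | ∃ p ∈ U ×ˢ Ioo (a : ℝ) (b : ℝ), f ω p.1 ≤ (p.2 : EReal)} =
        {ω : Ω | (⨅ x : U, f ω x) < ((b : ℝ) : EReal)} := by
      ext ω
      simp only [mem_setOf_eq]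
      constructor
      · rintro ⟨⟨x, r⟩, ⟨hx, har, hrb⟩, hfr⟩
        calc (⨅ y : U, f ω y) ≤ f ω x := iInf_le _ (⟨x, hx⟩ : U)
          _ ≤ (r : EReal) := hfr
          _ < ((b : ℝ) : EReal) := by exact_mod_cast hrb
      · intro hlt
        rw [iInf_lt_iff] at hlt
        obtain ⟨⟨x, hx⟩, hfx⟩ := hlt
        have hc : max (((a : ℝ)) : EReal) (f ω x) < ((b : ℝ) : EReal) := by
          apply max_lt _ hfx
          exact_mod_cast hab
        obtain ⟨q, hq1, hq2⟩ := EReal.exists_rat_btwn_of_lt hc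
        have haq : (a : ℝ) < (q : ℝ) := by
          have := (le_max_left (((a : ℝ)) : EReal) (f ω x)).trans_lt hq1
          exact_mod_cast this
        have hqb : (q : ℝ) < (b : ℝ) := by exact_mod_cast hq2
        refine ⟨(x, (q : ℝ)), ⟨hx, haq, hqb⟩, ?_⟩
        exact ((le_max_right (((a : ℝ)) : EReal) (f ω x)).trans_lt hq1).le
    rw [hkey]
    exact measurableSet_lt (h U (hBT.isOpen hU)) measurable_const
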